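/- The set S4 = {(x,y) ∈ ℤ×ℤ : x ≡ 2y (mod 5)} is strongly optimal for the infinite square grid T4: for every vertex v of T4, exactly one vertex of the closed neighborhood N[v] belongs to S4. Consequently the closed neighborhoods N[s], s ∈ S4, partition the vertex set of T4. -/

import Mathlib

/-- The infinite square grid: vertices `ℤ × ℤ`, with `(x,y)` adjacent to `(x',y')` iff
`|x−x'| + |y−y'| = 1`. -/
def T4 : SimpleGraph (ℤ × ℤ) where
  Adj p q := |p.1 - q.1| + |p.2 - q.2| = 1
  symm := by
    constructor
    intro p q h
    rw [abs_sub_comm q.1 p.1, abs_sub_comm q.2 p.2]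
    exact h
  loopless := by
    constructor
    intro p h
    simp at h

/-- `S4 = {(x,y) : x ≡ 2y (mod 5)}`. -/
def S4 : Set (ℤ × ℤ) := {p | Int.ModEq 5 p.1 (2 * p.2)}

/-- The closed neighborhood `N[v]` in `T4`. -/
def closedNbhdT4 (v : ℤ × ℤ) : Set (ℤ × ℤ) := insert v (T4.neighborSet v)

lemma mem_closed (u v : ℤ × ℤ) :
    u ∈ closedNbhdT4 v ↔
      (u.1 = v.1 ∧ u.2 = v.2) ∨ (u.1 = v.1 + 1 ∧ u.2 = v.2) ∨ (u.1 = v.1 - 1 ∧ u.2 = v.2) ∨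
      (u.1 = v.1 ∧ u.2 = v.2 + 1) ∨ (u.1 = v.1 ∧ u.2 = v.2 - 1) := by
  simp only [closedNbhdT4, Set.mem_insert_iff, SimpleGraph.mem_neighborSet, T4, Prod.ext_iff, Int.abs_eq_natAbs]
  omega

lemma mem_S4 (u : ℤ × ℤ) : u ∈ S4 ↔ u.1 % 5 = (2 * u.2) % 5 := Iff.rfl

lemma exu (v : ℤ × ℤ) : ∃! u : ℤ × ℤ, u ∈ S4 ∧ u ∈ closedNbhdT4 v := by
  obtain ⟨x, y⟩ := v
  simp only [mem_S4, mem_closed]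
  have h : (x - 2*y) % 5 = 0 ∨ (x - 2*y) % 5 = 1 ∨ (x - 2*y) % 5 = 2 ∨
      (x - 2*y) % 5 = 3 ∨ (x - 2*y) % 5 = 4 := by omega
  rcases h with h | h | h | h | h
  · exact ⟨(x, y), ⟨by simp; omega, by simp⟩,
      fun u ⟨h1, h2⟩ => by apply Prod.ext <;> simp at * <;> omega⟩
  · exact ⟨(x - 1, y), ⟨by simp; omega, by simp⟩,
      fun u ⟨h1, h2⟩ => by apply Prod.ext <;> simp at * <;> omega⟩
  · exact ⟨(x, y + 1), ⟨by simp; omega, by simp⟩,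
      fun u ⟨h1, h2⟩ => by apply Prod.ext <;> simp at * <;> omega⟩
  · exact ⟨(x, y - 1), ⟨by simp; omega, by simp⟩,
      fun u ⟨h1, h2⟩ => by apply Prod.ext <;> simp at * <;> omega⟩
  · exact ⟨(x + 1, y), ⟨by simp; omega, by simp⟩,
      fun u ⟨h1, h2⟩ => by apply Prod.ext <;> simp at * <;> omega⟩

lemma symm_mem (u v : ℤ × ℤ) : u ∈ closedNbhdT4 v ↔ v ∈ closedNbhdT4 u := by
  rw [mem_closed, mem_closed]; omega

theorem stmt_4 :
    (∀ v : ℤ × ℤ, ∃! u : ℤ × ℤ, u ∈ S4 ∧ u ∈ closedNbhdT4 v) ∧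
    (⋃ s ∈ S4, closedNbhdT4 s) = Set.univ ∧
    S4.PairwiseDisjoint closedNbhdT4 := by
  refine ⟨exu, ?_, ?_⟩
  · ext v
    simp only [Set.mem_iUnion, Set.mem_univ, iff_true]
    obtain ⟨u, ⟨hS, hN⟩, -⟩ := exu v
    exact ⟨u, hS, (symm_mem v u).mpr hN⟩
  · intro s hs t ht hst
    simp only [Function.onFun]
    rw [Set.disjoint_left]
    intro u hu hu'
    obtain ⟨w, -, huniq⟩ := exu u
    exact hst (by rw [huniq s ⟨hs, (symm_mem s u).mpr hu⟩, huniq t ⟨ht, (symm_mem t u).mpr hu'⟩])
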